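/- For all n ≥ 1, k ≥ 0 and p ≥ 0, the number of self-dual Fishburn matrices of reduced size n whose first row has sum k and whose diagonal cells have sum p equals the number of matrices in SM(n) whose first row has sum k and whose center column has sum p; that is, |M(n,k,p)| = |SM(n,k,p)|. -/

import Mathlib

open Finset

/-- Square matrices of nonnegative integers of dimension `m` (0-based indexing). -/
abbrev Mat (m : ℕ) := Matrix (Fin m) (Fin m) ℕ

/-- Upper-triangular: all entries strictly below the main diagonal vanish. -/
def UT {m : ℕ} (M : Mat m) : Prop := ∀ i j : Fin m, (j : ℕ) < (i : ℕ) → M i j = 0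

/-- The size of a matrix: the sum of all its entries. -/
def msize {m : ℕ} (M : Mat m) : ℕ := ∑ i : Fin m, ∑ j : Fin m, M i j

/-- Row `i` contains a nonzero entry. -/
def rowNonzero {m : ℕ} (M : Mat m) (i : Fin m) : Prop := ∃ j, M i j ≠ 0

/-- Column `j` contains a nonzero entry. -/
def colNonzero {m : ℕ} (M : Mat m) (j : Fin m) : Prop := ∃ i, M i j ≠ 0

/-- The dual matrix: transpose along the antidiagonal, `M̄_{i,j} = M_{m+1-j,m+1-i}`. -/
def dual {m : ℕ} (M : Mat m) : Mat m := fun i j => M j.rev i.rev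

/-- A matrix is self-dual if it equals its dual. -/
def SelfDual {m : ℕ} (M : Mat m) : Prop := M = dual M

/-- A Fishburn matrix: upper-triangular, every row and every column contains a
nonzero entry. -/
def IsFishburn {m : ℕ} (M : Mat m) : Prop :=
  UT M ∧ (∀ i, rowNonzero M i) ∧ (∀ j, colNonzero M j)

/-- The reduced size: sum of the entries in NW-cells and diagonal cells
(in 1-based terms, cells `(i,j)` with `i + j ≤ m + 1`). -/
def reducedSize {m : ℕ} (M : Mat m) : ℕ :=
  ∑ i : Fin m, ∑ j : Fin m, if (i : ℕ) + (j : ℕ) + 1 ≤ m then M i j else 0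

/-- The reduced matrix: all entries in SE-cells are replaced by zeros. -/
def reduced {m : ℕ} (M : Mat m) : Mat m :=
  fun i j => if (i : ℕ) + (j : ℕ) + 1 ≤ m then M i j else 0

/-- A super triangular matrix: upper-triangular and all SE-cells are zero. -/
def SuperTri {m : ℕ} (M : Mat m) : Prop :=
  UT M ∧ ∀ i j : Fin m, m < (i : ℕ) + (j : ℕ) + 1 → M i j = 0

/-- The sum of the first row. -/
def firstRowSum {m : ℕ} (M : Mat m) : ℕ :=
  ∑ i : Fin m, ∑ j : Fin m, if (i : ℕ) = 0 then M i j else 0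

/-- The sum of the last column. -/
def lastColSum {m : ℕ} (M : Mat m) : ℕ :=
  ∑ i : Fin m, ∑ j : Fin m, if (j : ℕ) + 1 = m then M i j else 0

/-- The sum of the diagonal cells (cells `(i,j)` with `i + j = m + 1`, 1-based). -/
def diagSum {m : ℕ} (M : Mat m) : ℕ :=
  ∑ i : Fin m, ∑ j : Fin m, if (i : ℕ) + (j : ℕ) + 1 = m then M i j else 0

/-- The sum of the center column (column `k+1` of a matrix of dimension `2k+1`). -/
def centerColSum {m : ℕ} (M : Mat m) : ℕ :=
  ∑ i : Fin m, ∑ j : Fin m, if 2 * (j : ℕ) + 1 = m then M i j else 0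

/-- Square matrices of arbitrary dimension. -/
abbrev SMat := Σ m : ℕ, Mat m

/-- `M(n)`: self-dual Fishburn matrices of reduced size `n`. -/
def Mset (n : ℕ) : Set SMat :=
  {A | IsFishburn A.2 ∧ SelfDual A.2 ∧ reducedSize A.2 = n}

/-- `M(n,k)`: matrices of `M(n)` whose first row has sum `k`. -/
def Mset₂ (n k : ℕ) : Set SMat := {A ∈ Mset n | firstRowSum A.2 = k}

/-- `M(n,k,p)`: matrices of `M(n,k)` whose diagonal cells have sum `p`. -/
def Mset₃ (n k p : ℕ) : Set SMat := {A ∈ Mset₂ n k | diagSum A.2 = p}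

/-- `EM(n,k)`: matrices of `M(n,k)` of even dimension. -/
def EMset (n k : ℕ) : Set SMat := {A ∈ Mset₂ n k | Even A.1}

/-- `OM(n,k)`: matrices of `M(n,k)` of odd dimension. -/
def OMset (n k : ℕ) : Set SMat := {A ∈ Mset₂ n k | Odd A.1}

/-- `RM(n)`: row-Fishburn matrices of size `n`. -/
def RMset (n : ℕ) : Set SMat :=
  {A | UT A.2 ∧ (∀ i, rowNonzero A.2 i) ∧ msize A.2 = n}

/-- `RM(n,k)`: row-Fishburn matrices of size `n` whose last column has sum `k`. -/
def RMset₂ (n k : ℕ) : Set SMat := {A ∈ RMset n | lastColSum A.2 = k}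

/-- `RM(n,k,p)`: matrices of `RM(n,k)` whose first row has sum `p`. -/
def RMset₃ (n k p : ℕ) : Set SMat := {A ∈ RMset₂ n k | firstRowSum A.2 = p}

/-- `SM(n)`: super triangular matrices of size `n` and dimension `2k+1` such that
(a) each of the first `k` columns contains a nonzero entry, and
(b) for `1 ≤ i ≤ k`, row `k+1-i` or column `k+1+i` contains a nonzero entry
(0-based: for `a < k`, row `a` or column `b` with `a + b = 2k` is nonzero). -/
def SMset (n : ℕ) : Set SMat :=
  {A | SuperTri A.2 ∧ msize A.2 = n ∧
    ∃ k : ℕ, A.1 = 2 * k + 1 ∧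
      (∀ j : Fin A.1, (j : ℕ) < k → colNonzero A.2 j) ∧
      (∀ a b : Fin A.1, (a : ℕ) < k → (a : ℕ) + (b : ℕ) = 2 * k →
        rowNonzero A.2 a ∨ colNonzero A.2 b)}

/-- `SM(n,k,p)`: matrices of `SM(n)` whose first row has sum `k` and whose center
column has sum `p`. -/
def SMset₃ (n k p : ℕ) : Set SMat :=
  {A ∈ SMset n | firstRowSum A.2 = k ∧ centerColSum A.2 = p}

/-- `B(n)`: upper-triangular matrices of size `n` in which every row except
possibly the first contains a nonzero entry. -/
def Bset (n : ℕ) : Set SMat :=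
  {A | UT A.2 ∧ (∀ i : Fin A.1, (i : ℕ) ≠ 0 → rowNonzero A.2 i) ∧ msize A.2 = n}

/-- `B(n,k,p)`: matrices of `B(n)` whose first row has sum `p` and whose last
column has sum `k`. -/
def Bset₃ (n k p : ℕ) : Set SMat :=
  {A ∈ Bset n | firstRowSum A.2 = p ∧ lastColSum A.2 = k}

-- ===== auxiliary development =====

/-- Entry access with out-of-range giving 0. -/
def entN {m : ℕ} (M : Mat m) (i j : ℕ) : ℕ :=
  if h : i < m ∧ j < m then M ⟨i, h.1⟩ ⟨j, h.2⟩ else 0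

lemma entN_eq {m : ℕ} (M : Mat m) (i j : Fin m) : entN M i j = M i j := by
  simp [entN, i.isLt, j.isLt]

lemma entN_eq' {m : ℕ} (M : Mat m) {i j : ℕ} (hi : i < m) (hj : j < m) :
    entN M i j = M ⟨i, hi⟩ ⟨j, hj⟩ := by
  simp [entN, hi, hj]

lemma entN_ne_zero {m : ℕ} {M : Mat m} {i j : ℕ} (h : entN M i j ≠ 0) :
    i < m ∧ j < m := by
  by_contra hc
  exact h (by simp [entN, hc])

lemma entN_zero_of_lt {m : ℕ} {M : Mat m} (hUT : UT M) {i j : ℕ} (h : j < i) :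
    entN M i j = 0 := by
  unfold entN
  split
  · exact hUT _ _ h
  · rfl

/-- Pre-swap matrix entries of the image of the bijection. -/
def preF (m : ℕ) (M : Mat m) (i t : ℕ) : ℕ :=
  if m % 2 = 1 then
    (if i + t ≤ 2 * (m / 2) then entN M i t else 0)
  else
    (if t < m / 2 then (if i + t + 1 ≤ 2 * (m / 2) then entN M i t else 0)
     else if t = m / 2 then 0
     else (if i + t ≤ 2 * (m / 2) then entN M i (t - 1) else 0))

/-- The swap of `K` and `2K - i` as a value map on `ℕ`. -/
def swv (K i j : ℕ) : ℕ := if j = K then 2 * K - i else if j = 2 * K - i then K else j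

lemma swv_invol (K i j : ℕ) : swv K i (swv K i j) = j := by
  unfold swv
  split_ifs <;> omega

lemma swv_le (K i j : ℕ) (hj : j ≤ 2 * K) : swv K i j ≤ 2 * K := by
  unfold swv; split_ifs <;> omega

/-- The swap of `K` and `2K - i` as a permutation of `Fin (2K+1)`. -/
def swp (K i : ℕ) : Equiv.Perm (Fin (2 * K + 1)) :=
  Equiv.swap ⟨K, by omega⟩ ⟨2 * K - i, by omega⟩

lemma swp_val (K i : ℕ) (j : Fin (2 * K + 1)) :
    ((swp K i j : Fin (2 * K + 1)) : ℕ) = swv K i (j : ℕ) := by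
  unfold swp swv
  rcases j with ⟨jv, hjv⟩
  simp only [Equiv.swap_apply_def, Fin.ext_iff]
  split_ifs <;> simp_all

/-- The matrix of the image of the bijection. -/
def Fmat (m : ℕ) (M : Mat m) : Mat (2 * (m / 2) + 1) :=
  fun i j => preF m M (i : ℕ) ((swp (m / 2) (i : ℕ) j : Fin (2 * (m / 2) + 1)) : ℕ)

/-- The bijection `F : M(n,k,p) → SM(n,k,p)`. -/
def Fmap : SMat → SMat := fun A => ⟨2 * (A.1 / 2) + 1, Fmat A.1 A.2⟩

/-- Shift function for the even case. -/
def shc (K t : ℕ) : ℕ := if t < K then t else t + 1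

/-- Entries of `τ(S)`. -/
def tN (d : ℕ) (S : Mat d) (i t : ℕ) : ℕ := entN S i (swv (d / 2) i t)

/-- Antidiagonal sum; nonzero iff the preimage has odd dimension. -/
def adSum (d : ℕ) (S : Mat d) : ℕ :=
  ∑ i ∈ Finset.range d, entN S i (2 * (d / 2) - i)

/-- Odd-case inverse matrix. -/
def GmatO (d : ℕ) (S : Mat d) : Mat (2 * (d / 2) + 1) := fun i j =>
  if (i : ℕ) + (j : ℕ) ≤ 2 * (d / 2) then tN d S i j
  else tN d S (2 * (d / 2) - (j : ℕ)) (2 * (d / 2) - (i : ℕ))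

/-- Even-case inverse matrix. -/
def GmatE (d : ℕ) (S : Mat d) : Mat (2 * (d / 2)) := fun i j =>
  if (i : ℕ) + (j : ℕ) + 1 ≤ 2 * (d / 2) then tN d S i (shc (d / 2) j)
  else tN d S (2 * (d / 2) - 1 - (j : ℕ)) (shc (d / 2) (2 * (d / 2) - 1 - (i : ℕ)))

/-- The inverse map `G`. -/
def Gmap : SMat → SMat := fun A =>
  if adSum A.1 A.2 = 0 then ⟨2 * (A.1 / 2), GmatE A.1 A.2⟩
  else ⟨2 * (A.1 / 2) + 1, GmatO A.1 A.2⟩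

lemma Gmap_odd {d : ℕ} {S : Mat d} (h : adSum d S ≠ 0) :
    Gmap ⟨d, S⟩ = ⟨2 * (d / 2) + 1, GmatO d S⟩ := by
  unfold Gmap; rw [if_neg h]

lemma Gmap_even {d : ℕ} {S : Mat d} (h : adSum d S = 0) :
    Gmap ⟨d, S⟩ = ⟨2 * (d / 2), GmatE d S⟩ := by
  unfold Gmap; rw [if_pos h]

lemma SMat_ext {A B : SMat} (hd : A.1 = B.1)
    (h : ∀ i j : ℕ, entN A.2 i j = entN B.2 i j) : A = B := by
  obtain ⟨d1, M1⟩ := A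
  obtain ⟨d2, M2⟩ := B
  simp only at hd
  subst hd
  refine congrArg (Sigma.mk d1) (funext fun i => funext fun j => ?_)
  have hh := h i j
  rwa [entN_eq, entN_eq] at hh
-- ===== statistic lemmas =====

lemma entN_eq'' {m : ℕ} (M : Mat m) {i : ℕ} (hi : i < m) (j : Fin m) :
    entN M i j = M ⟨i, hi⟩ j := by
  rw [entN_eq' M hi j.isLt]

def redN (m : ℕ) (M : Mat m) (i j : ℕ) : ℕ := if i + j + 1 ≤ m then entN M i j else 0

lemma sum_range_entN {m : ℕ} (M : Mat m) {i : ℕ} (hi : i < m) :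
    ∑ j ∈ Finset.range m, entN M i j = ∑ j : Fin m, M ⟨i, hi⟩ j := by
  rw [← Fin.sum_univ_eq_sum_range (fun j => entN M i j) m]
  exact Finset.sum_congr rfl fun j _ => entN_eq'' M hi j

lemma msize_eq {m : ℕ} (M : Mat m) :
    msize M = ∑ i ∈ Finset.range m, ∑ j ∈ Finset.range m, entN M i j := by
  unfold msize
  rw [← Fin.sum_univ_eq_sum_range (fun i => ∑ j ∈ Finset.range m, entN M i j) m]
  exact Finset.sum_congr rfl fun i _ => (sum_range_entN M i.isLt).symm

lemma reducedSize_eq {m : ℕ} (M : Mat m) :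
    reducedSize M = ∑ i ∈ Finset.range m, ∑ j ∈ Finset.range m, redN m M i j := by
  unfold reducedSize
  rw [← Fin.sum_univ_eq_sum_range (fun i => ∑ j ∈ Finset.range m, redN m M i j) m]
  refine Finset.sum_congr rfl fun i _ => ?_
  rw [← Fin.sum_univ_eq_sum_range (fun j => redN m M i j) m]
  refine Finset.sum_congr rfl fun j _ => ?_
  rw [redN, entN_eq]

lemma firstRowSum_eq {m : ℕ} (hm : 0 < m) (M : Mat m) :
    firstRowSum M = ∑ j ∈ Finset.range m, entN M 0 j := by
  unfold firstRowSum
  rw [Finset.sum_eq_single (⟨0, hm⟩ : Fin m)]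
  · rw [sum_range_entN M hm]
    exact Finset.sum_congr rfl fun j _ => by simp
  · intro b _ hb
    have hb' : (b : ℕ) ≠ 0 := fun h => hb (Fin.ext h)
    simp [hb']
  · intro h; exact absurd (Finset.mem_univ _) h

lemma diagSum_eq {m : ℕ} (M : Mat m) :
    diagSum M = ∑ i ∈ Finset.range m, entN M i (m - 1 - i) := by
  unfold diagSum
  rw [← Fin.sum_univ_eq_sum_range (fun i => entN M i (m - 1 - i)) m]
  refine Finset.sum_congr rfl fun i _ => ?_
  rw [Finset.sum_eq_single (⟨m - 1 - (i : ℕ), by omega⟩ : Fin m)]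
  · rw [if_pos (by have := i.isLt; simp only [Fin.val_mk]; omega),
      entN_eq' M i.isLt (by omega : m - 1 - (i : ℕ) < m)]
  · intro b _ hb
    refine if_neg fun h => hb (Fin.ext ?_)
    simp only [Fin.val_mk]
    omega
  · intro h; exact absurd (Finset.mem_univ _) h

lemma centerColSum_eq {K : ℕ} (S : Mat (2 * K + 1)) :
    centerColSum S = ∑ i ∈ Finset.range (2 * K + 1), entN S i K := by
  unfold centerColSum
  rw [← Fin.sum_univ_eq_sum_range (fun i => entN S i K) (2 * K + 1)]
  refine Finset.sum_congr rfl fun i _ => ?_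
  rw [Finset.sum_eq_single (⟨K, by omega⟩ : Fin (2 * K + 1))]
  · rw [if_pos (by simp only [Fin.val_mk]), entN_eq' S i.isLt (by omega : K < 2 * K + 1)]
  · intro b _ hb
    refine if_neg fun h => hb (Fin.ext ?_)
    simp only [Fin.val_mk]
    omega
  · intro h; exact absurd (Finset.mem_univ _) h

/-- Key row-sum reindexing lemma. -/
lemma rowsum_pre (m : ℕ) (M : Mat m) (i : ℕ) :
    ∑ t ∈ Finset.range (2 * (m / 2) + 1), preF m M i t
      = ∑ j ∈ Finset.range m, redN m M i j := by
  by_cases hm : m % 2 = 1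
  · rw [show 2 * (m / 2) + 1 = m by omega]
    refine Finset.sum_congr rfl fun t _ => ?_
    rw [preF, if_pos hm, redN]
    exact if_congr (by omega) rfl rfl
  · have hm0 : m = 2 * (m / 2) := by omega
    set K := m / 2 with hK
    have hpre : ∀ t, preF m M i t =
        (if t < K then (if i + t + 1 ≤ 2 * K then entN M i t else 0)
         else if t = K then 0
         else (if i + t ≤ 2 * K then entN M i (t - 1) else 0)) := by
      intro t; rw [preF, if_neg hm]
    have h0 : preF m M i K = 0 := by rw [hpre]; simp
    have e2 : ∑ t ∈ Finset.Ico K (2 * K + 1), preF m M i t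
        = ∑ j ∈ Finset.Ico K (2 * K), redN m M i j := by
      have s1 : ∑ t ∈ Finset.Ico K (2 * K + 1), preF m M i t
          = ∑ x ∈ Finset.range K, preF m M i (K + 1 + x) := by
        rw [Finset.sum_eq_sum_Ico_succ_bot (by omega : K < 2 * K + 1), h0, zero_add,
          Finset.sum_Ico_eq_sum_range, show 2 * K + 1 - (K + 1) = K by omega]
      have s2 : ∀ x ∈ Finset.range K, preF m M i (K + 1 + x) = redN m M i (K + x) := by
        intro x _
        rw [hpre, if_neg (by omega), if_neg (by omega), redN,
          show K + 1 + x - 1 = K + x by omega]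
        exact if_congr (by omega) rfl rfl
      have s3 : ∑ j ∈ Finset.Ico K (2 * K), redN m M i j
          = ∑ x ∈ Finset.range K, redN m M i (K + x) := by
        rw [Finset.sum_Ico_eq_sum_range, show 2 * K - K = K by omega]
      rw [s1, Finset.sum_congr rfl s2, s3]
    have e3 : ∀ t ∈ Finset.Ico 0 K, preF m M i t = redN m M i t := by
      intro t ht
      rw [hpre, if_pos (by simpa using (Finset.mem_Ico.1 ht).2), redN]
      exact if_congr (by omega) rfl rfl
    calc ∑ t ∈ Finset.range (2 * K + 1), preF m M i t
        = (∑ t ∈ Finset.Ico 0 K, preF m M i t)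
            + ∑ t ∈ Finset.Ico K (2 * K + 1), preF m M i t := by
          rw [Finset.sum_Ico_consecutive (fun t => preF m M i t) (Nat.zero_le K) (by omega),
            Finset.range_eq_Ico]
      _ = (∑ t ∈ Finset.Ico 0 K, redN m M i t)
            + ∑ j ∈ Finset.Ico K (2 * K), redN m M i j := by
          rw [Finset.sum_congr rfl e3, e2]
      _ = ∑ j ∈ Finset.range m, redN m M i j := by
          rw [Finset.sum_Ico_consecutive (fun t => redN m M i t) (Nat.zero_le K) (by omega),
            ← Finset.range_eq_Ico, ← hm0]

lemma rowsum_Fmat (m : ℕ) (M : Mat m) (i : Fin (2 * (m / 2) + 1)) :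
    ∑ j : Fin (2 * (m / 2) + 1), Fmat m M i j
      = ∑ j ∈ Finset.range m, redN m M i j := by
  have h1 : ∑ j : Fin (2 * (m / 2) + 1), Fmat m M i j
      = ∑ j : Fin (2 * (m / 2) + 1), preF m M (i : ℕ) (j : ℕ) :=
    Equiv.sum_comp (swp (m / 2) (i : ℕ)) (fun t => preF m M (i : ℕ) (t : ℕ))
  rw [h1, Fin.sum_univ_eq_sum_range (fun t => preF m M (i : ℕ) t), rowsum_pre]

lemma redN_zero_of_ge {m : ℕ} (M : Mat m) {i : ℕ} (hi : m ≤ i) (j : ℕ) :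
    redN m M i j = 0 := by
  have : entN M i j = 0 := by
    unfold entN; rw [dif_neg (by omega)]
  simp [redN, this]

lemma msize_Fmat (m : ℕ) (M : Mat m) : msize (Fmat m M) = reducedSize M := by
  have h1 : msize (Fmat m M)
      = ∑ i ∈ Finset.range (2 * (m / 2) + 1), ∑ j ∈ Finset.range m, redN m M i j := by
    unfold msize
    rw [← Fin.sum_univ_eq_sum_range (fun i => ∑ j ∈ Finset.range m, redN m M i j)]
    exact Finset.sum_congr rfl fun i _ => rowsum_Fmat m M i
  rw [h1, reducedSize_eq]
  refine (Finset.sum_subset (Finset.range_subset_range.2 (by omega)) ?_).symm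
  intro i _ hi
  exact Finset.sum_eq_zero fun j _ =>
    redN_zero_of_ge M (by simpa using fun h => hi (Finset.mem_range.2 h)) j

lemma firstRowSum_Fmat {m : ℕ} (hm : 0 < m) (M : Mat m) :
    firstRowSum (Fmat m M) = firstRowSum M := by
  rw [firstRowSum_eq (by omega : 0 < 2 * (m / 2) + 1) (Fmat m M),
    sum_range_entN (Fmat m M) (by omega : 0 < 2 * (m / 2) + 1),
    rowsum_Fmat m M ⟨0, by omega⟩, firstRowSum_eq hm M]
  refine Finset.sum_congr rfl fun j hj => ?_
  rw [redN, if_pos (by simpa using Finset.mem_range.1 hj)]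
-- ===== center column and support lemmas =====

lemma swv_self (K i : ℕ) : swv K i K = 2 * K - i := by simp [swv]

lemma Fmat_apply (m : ℕ) (M : Mat m) (i j : Fin (2 * (m / 2) + 1)) :
    Fmat m M i j = preF m M (i : ℕ) (swv (m / 2) (i : ℕ) (j : ℕ)) := by
  rw [Fmat, swp_val]

lemma centerColSum_Fmat {m : ℕ} (M : Mat m) (hUT : UT M) :
    centerColSum (Fmat m M) = diagSum M := by
  set K := m / 2 with hK
  rw [centerColSum_eq (Fmat m M), diagSum_eq]
  have hent : ∀ i ∈ Finset.range (2 * K + 1),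
      entN (Fmat m M) i K = preF m M i (2 * K - i) := by
    intro i hi
    rw [entN_eq' (Fmat m M) (Finset.mem_range.1 hi) (by omega : K < 2 * K + 1),
      Fmat_apply]
    simp only [Fin.val_mk, ← hK, swv_self]
  rw [Finset.sum_congr rfl hent]
  by_cases hm : m % 2 = 1
  · have hm1 : m = 2 * K + 1 := by omega
    refine Finset.sum_congr (by rw [hm1]) fun i hi => ?_
    have hi' : i < 2 * K + 1 := by rw [← hm1]; exact Finset.mem_range.1 hi
    rw [preF, if_pos hm, if_pos (by omega), show m - 1 - i = 2 * K - i by omega]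
  · have hm0 : m = 2 * K := by omega
    have hL : ∑ i ∈ Finset.range (2 * K + 1), preF m M i (2 * K - i)
        = ∑ i ∈ Finset.range K, entN M i (m - 1 - i) := by
      refine (Finset.sum_subset (Finset.range_subset_range.2 (by omega)) ?_).symm.trans
        (Finset.sum_congr rfl ?_)
      · intro i hi hni
        have hiK : K ≤ i := by
          by_contra hc
          exact hni (Finset.mem_range.2 (by omega))
        have hi' : i < 2 * K + 1 := Finset.mem_range.1 hi
        rcases eq_or_lt_of_le hiK with h | h
        · rw [preF, if_neg hm, show 2 * K - i = K by omega]
          simp [← hK]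
        · rw [preF, if_neg hm, if_pos (by omega : 2 * K - i < K),
            if_neg (by omega : ¬ i + (2 * K - i) + 1 ≤ 2 * K)]
      · intro i hi
        have hi' : i < K := Finset.mem_range.1 hi
        rw [preF, if_neg hm, if_neg (by omega : ¬ 2 * K - i < K),
          if_neg (by omega : ¬ 2 * K - i = K), if_pos (by omega : i + (2 * K - i) ≤ 2 * K),
          show 2 * K - i - 1 = m - 1 - i by omega]
    rw [hL]
    refine Finset.sum_subset (Finset.range_subset_range.2 (by omega)) ?_
    intro i hi hni
    have h1 : K ≤ i := by by_contra hc; exact hni (Finset.mem_range.2 (by omega))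
    have h2 : i < 2 * K := by rw [← hm0]; exact Finset.mem_range.1 hi
    exact entN_zero_of_lt hUT (by omega)

lemma entN_le {m : ℕ} {M : Mat m} (hUT : UT M) {i j : ℕ} (h : entN M i j ≠ 0) :
    i ≤ j := by
  by_contra hc
  exact h (entN_zero_of_lt hUT (by omega))

lemma preF_support {m : ℕ} {M : Mat m} (hUT : UT M) {i t : ℕ}
    (h : preF m M i t ≠ 0) : i ≤ t ∧ i + t ≤ 2 * (m / 2) := by
  set K := m / 2 with hK
  by_cases hm : m % 2 = 1 <;> rw [preF] at h <;> simp only [hm, if_true, if_false] at h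
  · split_ifs at h with h1
    · exact ⟨entN_le hUT h, h1⟩
    · exact absurd rfl h
  · split_ifs at h with h1 h2 h3 h4
    · exact ⟨entN_le hUT h, by omega⟩
    · exact absurd rfl h
    · exact absurd rfl h
    · have := entN_le hUT h
      exact ⟨by omega, by omega⟩
    · exact absurd rfl h

lemma Fmat_support {m : ℕ} {M : Mat m} (hUT : UT M)
    {i j : Fin (2 * (m / 2) + 1)} (h : Fmat m M i j ≠ 0) :
    (i : ℕ) ≤ (j : ℕ) ∧ (i : ℕ) + (j : ℕ) ≤ 2 * (m / 2) := by
  rw [Fmat_apply] at h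
  have hs := preF_support hUT h
  have hi := i.isLt
  have hj := j.isLt
  revert hs
  unfold swv
  split_ifs <;> omega

lemma Fmat_superTri {m : ℕ} {M : Mat m} (hUT : UT M) : SuperTri (Fmat m M) := by
  constructor
  · intro i j hlt
    by_contra h
    exact absurd (Fmat_support hUT h).1 (by omega)
  · intro i j hlt
    by_contra h
    exact absurd (Fmat_support hUT h).2 (by omega)
-- ===== forward nonzero conditions =====

lemma selfdual_entN {m : ℕ} {M : Mat m} (hSD : SelfDual M) {i j : ℕ}
    (hi : i < m) (hj : j < m) : entN M i j = entN M (m - 1 - j) (m - 1 - i) := by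
  have h := congrFun (congrFun hSD ⟨i, hi⟩) ⟨j, hj⟩
  simp only [dual] at h
  rw [entN_eq' M hi hj, entN_eq' M (show m - 1 - j < m by omega)
    (show m - 1 - i < m by omega), h]
  congr 1 <;> exact Fin.ext (by simp [Fin.val_rev]; omega)

lemma preF_odd {m : ℕ} (M : Mat m) (hm : m % 2 = 1) {i t : ℕ}
    (h2 : i + t ≤ 2 * (m / 2)) : preF m M i t = entN M i t := by
  rw [preF, if_pos hm, if_pos h2]

lemma preF_low {m : ℕ} (M : Mat m) {i t : ℕ} (h1 : t < m / 2)
    (h2 : i + t + 1 ≤ 2 * (m / 2)) : preF m M i t = entN M i t := by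
  by_cases hm : m % 2 = 1
  · rw [preF, if_pos hm, if_pos (by omega)]
  · rw [preF, if_neg hm, if_pos h1, if_pos h2]

lemma preF_high_even {m : ℕ} (M : Mat m) (hm : ¬ m % 2 = 1) {i t : ℕ}
    (h1 : m / 2 < t) (h2 : i + t ≤ 2 * (m / 2)) :
    preF m M i t = entN M i (t - 1) := by
  rw [preF, if_neg hm, if_neg (by omega), if_neg (by omega), if_pos h2]

lemma Fmat_conda {m : ℕ} {M : Mat m} (hUT : UT M)
    (hcol : ∀ j, colNonzero M j) :
    ∀ j : Fin (2 * (m / 2) + 1), (j : ℕ) < m / 2 → colNonzero (Fmat m M) j := by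
  set K := m / 2 with hK
  intro j hj
  have hm2 : m = 2 * K ∨ m = 2 * K + 1 := by omega
  have hjm : (j : ℕ) < m := by omega
  obtain ⟨i0, hi0⟩ := hcol ⟨(j : ℕ), hjm⟩
  have hle : (i0 : ℕ) ≤ (j : ℕ) := by
    by_contra hc
    exact hi0 (hUT _ _ (by simpa using hc))
  have hent : entN M i0 j ≠ 0 := by
    rw [entN_eq' M i0.isLt hjm]
    simpa [Fin.eta] using hi0
  refine ⟨⟨(i0 : ℕ), by omega⟩, ?_⟩
  rw [Fmat_apply]
  simp only [Fin.val_mk]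
  have hswv : swv K (i0 : ℕ) (j : ℕ) = (j : ℕ) := by
    rw [swv, if_neg (by omega), if_neg (by omega)]
  rw [hswv, preF_low M (by omega) (by omega)]
  exact hent

lemma Fmat_condb {m : ℕ} {M : Mat m} (hUT : UT M) (hSD : SelfDual M)
    (hrow : ∀ i, rowNonzero M i) :
    ∀ a b : Fin (2 * (m / 2) + 1), (a : ℕ) < m / 2 → (a : ℕ) + (b : ℕ) = 2 * (m / 2) →
      rowNonzero (Fmat m M) a ∨ colNonzero (Fmat m M) b := by
  set K := m / 2 with hK
  intro a b ha hab
  have hm2 : m = 2 * K ∨ m = 2 * K + 1 := by omega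
  have ham : (a : ℕ) < m := by omega
  obtain ⟨j0, hj0⟩ := hrow ⟨(a : ℕ), ham⟩
  have haj : (a : ℕ) ≤ (j0 : ℕ) := by
    by_contra hc
    exact hj0 (hUT _ _ (by simpa using hc))
  have hent : entN M a j0 ≠ 0 := by
    rw [entN_eq' M ham j0.isLt]
    simpa [Fin.eta] using hj0
  by_cases hcase : (a : ℕ) + (j0 : ℕ) + 1 ≤ m
  · -- NW or diagonal cell: row a of the image is nonzero
    left
    by_cases hm : m % 2 = 1
    · refine ⟨⟨swv K (a : ℕ) (j0 : ℕ), by have := swv_le K (a : ℕ) (j0 : ℕ) (by omega); omega⟩, ?_⟩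
      rw [Fmat_apply]
      simp only [Fin.val_mk]
      rw [swv_invol, preF_odd M hm (by omega)]
      exact hent
    · set t0 := shc K (j0 : ℕ) with ht0
      have ht0le : t0 ≤ 2 * K := by rw [ht0, shc]; split_ifs <;> omega
      refine ⟨⟨swv K (a : ℕ) t0, by have := swv_le K (a : ℕ) t0 ht0le; omega⟩, ?_⟩
      rw [Fmat_apply]
      simp only [Fin.val_mk]
      rw [swv_invol]
      by_cases hj0K : (j0 : ℕ) < K
      · rw [show t0 = (j0 : ℕ) by rw [ht0, shc, if_pos hj0K],
          preF_low M hj0K (by omega)]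
        exact hent
      · rw [show t0 = (j0 : ℕ) + 1 by rw [ht0, shc, if_neg hj0K],
          preF_high_even M hm (by omega) (by omega)]
        simpa using hent
  · -- SE cell: column b of the image is nonzero
    right
    by_cases hm : m % 2 = 1
    · refine ⟨⟨2 * K - (j0 : ℕ), by omega⟩, ?_⟩
      rw [Fmat_apply]
      simp only [Fin.val_mk]
      have hswv : swv K (2 * K - (j0 : ℕ)) (b : ℕ) = (b : ℕ) := by
        rw [swv, if_neg (by omega), if_neg (by have := j0.isLt; omega)]
      rw [hswv, preF_odd M hm (by have := j0.isLt; omega)]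
      rw [show (2 * K - (j0 : ℕ)) = m - 1 - (j0 : ℕ) by omega,
        show (b : ℕ) = m - 1 - (a : ℕ) by omega]
      rw [← selfdual_entN hSD ham j0.isLt]
      exact hent
    · refine ⟨⟨2 * K - 1 - (j0 : ℕ), by omega⟩, ?_⟩
      rw [Fmat_apply]
      simp only [Fin.val_mk]
      have hj0m : (j0 : ℕ) < 2 * K := by omega
      have hswv : swv K (2 * K - 1 - (j0 : ℕ)) (b : ℕ) = (b : ℕ) := by
        rw [swv, if_neg (by omega), if_neg (by omega)]
      rw [hswv, preF_high_even M hm (by omega) (by omega)]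
      rw [show (2 * K - 1 - (j0 : ℕ)) = m - 1 - (j0 : ℕ) by omega,
        show (b : ℕ) - 1 = m - 1 - (a : ℕ) by omega]
      rw [← selfdual_entN hSD ham j0.isLt]
      exact hent
-- ===== backward: support, UT, SelfDual =====

lemma S_support {d : ℕ} {S : Mat d} (hST : SuperTri S) {i j : ℕ}
    (h : entN S i j ≠ 0) : i ≤ j ∧ i + j + 1 ≤ d := by
  obtain ⟨hi, hj⟩ := entN_ne_zero h
  rw [entN_eq' S hi hj] at h
  constructor
  · by_contra hc
    exact h (hST.1 ⟨i, hi⟩ ⟨j, hj⟩ (by simpa using hc))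
  · by_contra hc
    exact h (hST.2 ⟨i, hi⟩ ⟨j, hj⟩ (by simpa using hc))

lemma tN_support {d : ℕ} {S : Mat d} (hST : SuperTri S) (hd : d % 2 = 1)
    {i t : ℕ} (h : tN d S i t ≠ 0) : i ≤ t ∧ i + t ≤ 2 * (d / 2) := by
  have hs := S_support hST h
  revert hs
  unfold swv
  split_ifs <;> omega

lemma tN_apply (d : ℕ) (S : Mat d) (i t : ℕ) :
    tN d S i t = entN S i (swv (d / 2) i t) := rfl

lemma tN_invol (d : ℕ) (S : Mat d) (i t : ℕ) :
    tN d S i (swv (d / 2) i t) = entN S i t := by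
  rw [tN_apply, swv_invol]

lemma adSum_zero_ent {d : ℕ} {S : Mat d} (hAD : adSum d S = 0) (i : ℕ) :
    entN S i (2 * (d / 2) - i) = 0 := by
  by_cases hi : i < d
  · exact Finset.sum_eq_zero_iff.1 hAD i (Finset.mem_range.2 hi)
  · unfold entN; rw [dif_neg (by omega)]

lemma tN_K_zero {d : ℕ} {S : Mat d} (hAD : adSum d S = 0) (i : ℕ) :
    tN d S i (d / 2) = 0 := by
  rw [tN_apply, swv_self]
  exact adSum_zero_ent hAD i

lemma GmatO_apply {d : ℕ} (S : Mat d) (i j : Fin (2 * (d / 2) + 1)) :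
    GmatO d S i j = if (i : ℕ) + (j : ℕ) ≤ 2 * (d / 2) then tN d S i j
      else tN d S (2 * (d / 2) - (j : ℕ)) (2 * (d / 2) - (i : ℕ)) := rfl

lemma GmatE_apply {d : ℕ} (S : Mat d) (i j : Fin (2 * (d / 2))) :
    GmatE d S i j = if (i : ℕ) + (j : ℕ) + 1 ≤ 2 * (d / 2) then tN d S i (shc (d / 2) j)
      else tN d S (2 * (d / 2) - 1 - (j : ℕ)) (shc (d / 2) (2 * (d / 2) - 1 - (i : ℕ))) := rfl

lemma GmatO_UT {d : ℕ} {S : Mat d} (hST : SuperTri S) (hd : d % 2 = 1) :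
    UT (GmatO d S) := by
  intro i j hlt
  rw [GmatO_apply]
  have hi := i.isLt
  have hj := j.isLt
  split_ifs with h1
  · by_contra h
    exact absurd (tN_support hST hd h).1 (by omega)
  · by_contra h
    exact absurd (tN_support hST hd h).1 (by omega)

lemma shc_bounds (K t : ℕ) : t ≤ shc K t ∧ shc K t ≤ t + 1 := by
  unfold shc; split_ifs <;> omega

lemma GmatE_UT {d : ℕ} {S : Mat d} (hST : SuperTri S) (hd : d % 2 = 1) :
    UT (GmatE d S) := by
  intro i j hlt
  rw [GmatE_apply]
  have hi := i.isLt
  have hj := j.isLt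
  split_ifs with h1
  · by_contra h
    have hs := tN_support hST hd h
    simp only [shc] at hs
    split_ifs at hs <;> omega
  · by_contra h
    have hs := tN_support hST hd h
    simp only [shc] at hs
    split_ifs at hs <;> omega

lemma GmatO_selfDual {d : ℕ} (S : Mat d) : SelfDual (GmatO d S) := by
  funext i j
  have hi := i.isLt
  have hj := j.isLt
  have hir : ((Fin.rev i : Fin (2 * (d / 2) + 1)) : ℕ) = 2 * (d / 2) - (i : ℕ) := by
    simp only [Fin.val_rev]; omega
  have hjr : ((Fin.rev j : Fin (2 * (d / 2) + 1)) : ℕ) = 2 * (d / 2) - (j : ℕ) := by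
    simp only [Fin.val_rev]; omega
  show GmatO d S i j = GmatO d S (Fin.rev j) (Fin.rev i)
  rw [GmatO_apply, GmatO_apply, hir, hjr]
  split_ifs with h1 h2 h3 <;>
    first
      | (congr 1 <;> omega)
      | (exfalso; omega)

lemma GmatE_selfDual {d : ℕ} (S : Mat d) : SelfDual (GmatE d S) := by
  funext i j
  have hi := i.isLt
  have hj := j.isLt
  have hir : ((Fin.rev i : Fin (2 * (d / 2))) : ℕ) = 2 * (d / 2) - 1 - (i : ℕ) := by
    simp only [Fin.val_rev]; omega
  have hjr : ((Fin.rev j : Fin (2 * (d / 2))) : ℕ) = 2 * (d / 2) - 1 - (j : ℕ) := by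
    simp only [Fin.val_rev]; omega
  show GmatE d S i j = GmatE d S (Fin.rev j) (Fin.rev i)
  rw [GmatE_apply, GmatE_apply, hir, hjr]
  split_ifs with h1 h2 h3 <;>
    first
      | (congr 2 <;> omega)
      | (exfalso; omega)
-- ===== backward: Fishburn conditions =====

lemma rowNonzero_of_selfdual {m : ℕ} {M : Mat m} (hSD : SelfDual M)
    (hcols : ∀ c, colNonzero M c) : ∀ a, rowNonzero M a := by
  intro a
  obtain ⟨i, hi⟩ := hcols (Fin.rev a)
  refine ⟨Fin.rev i, ?_⟩
  have h := congrFun (congrFun hSD i) (Fin.rev a)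
  simp only [dual] at h
  rw [Fin.rev_rev] at h
  rw [← h]
  exact hi

lemma colNonzero_entN {m : ℕ} {M : Mat m} {j : Fin m} (h : colNonzero M j) :
    ∃ i : ℕ, i < m ∧ entN M i (j : ℕ) ≠ 0 := by
  obtain ⟨i, hi⟩ := h
  exact ⟨(i : ℕ), i.isLt, by rw [entN_eq]; exact hi⟩

lemma rowNonzero_entN {m : ℕ} {M : Mat m} {i : Fin m} (h : rowNonzero M i) :
    ∃ j : ℕ, j < m ∧ entN M (i : ℕ) j ≠ 0 := by
  obtain ⟨j, hj⟩ := h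
  exact ⟨(j : ℕ), j.isLt, by rw [entN_eq]; exact hj⟩

lemma GmatO_cols {d k₀ : ℕ} {S : Mat d} (hST : SuperTri S) (hdk : d = 2 * k₀ + 1)
    (conda : ∀ j : Fin d, (j : ℕ) < k₀ → colNonzero S j)
    (condb : ∀ a b : Fin d, (a : ℕ) < k₀ → (a : ℕ) + (b : ℕ) = 2 * k₀ →
      rowNonzero S a ∨ colNonzero S b)
    (hAD : adSum d S ≠ 0) :
    ∀ c : Fin (2 * (d / 2) + 1), colNonzero (GmatO d S) c := by
  have hK : d / 2 = k₀ := by omega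
  intro c
  have hc := c.isLt
  rcases lt_trichotomy (c : ℕ) k₀ with hlt | heq | hgt
  · obtain ⟨i, him, hient⟩ := colNonzero_entN (conda ⟨(c : ℕ), by omega⟩ (by simpa using hlt))
    simp only [Fin.val_mk] at hient
    have hsupp := S_support hST hient
    refine ⟨⟨i, by omega⟩, ?_⟩
    rw [GmatO_apply]
    simp only [Fin.val_mk]
    rw [if_pos (by omega), tN_apply,
      show swv (d / 2) i (c : ℕ) = (c : ℕ) by rw [swv, if_neg (by omega), if_neg (by omega)]]
    exact hient
  · obtain ⟨i, him, hient⟩ := Finset.exists_ne_zero_of_sum_ne_zero hAD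
    have him' : i < d := Finset.mem_range.1 him
    have hsupp := S_support hST hient
    refine ⟨⟨i, by omega⟩, ?_⟩
    rw [GmatO_apply]
    simp only [Fin.val_mk]
    rw [if_pos (by omega), tN_apply, show (c : ℕ) = d / 2 by omega, swv_self]
    exact hient
  · set a := 2 * k₀ - (c : ℕ) with ha
    have hak : a < k₀ := by omega
    rcases condb ⟨a, by omega⟩ ⟨(c : ℕ), by omega⟩ (by simpa using hak)
        (by simp only [Fin.val_mk]; omega) with hrow | hcol
    · obtain ⟨t, htm, htent⟩ := rowNonzero_entN hrow
      simp only [Fin.val_mk] at htent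
      have hsupp := S_support hST htent
      set u := swv (d / 2) a t with hu
      have hts : tN d S a u ≠ 0 := by rw [hu, tN_invol]; exact htent
      have hule : u ≤ 2 * k₀ - a := by
        rw [hu]; unfold swv; split_ifs <;> omega
      rcases eq_or_lt_of_le hule with hueq | hult
      · refine ⟨⟨a, by omega⟩, ?_⟩
        rw [GmatO_apply]
        simp only [Fin.val_mk]
        rw [if_pos (by omega), show (c : ℕ) = u by omega]
        exact hts
      · refine ⟨⟨2 * k₀ - u, by omega⟩, ?_⟩
        rw [GmatO_apply]
        simp only [Fin.val_mk]
        rw [if_neg (by omega), show 2 * (d / 2) - (c : ℕ) = a by omega,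
          show 2 * (d / 2) - (2 * k₀ - u) = u by omega]
        exact hts
    · obtain ⟨i, him, hient⟩ := colNonzero_entN hcol
      simp only [Fin.val_mk] at hient
      have hsupp := S_support hST hient
      have hia : i ≤ a := by omega
      rcases eq_or_lt_of_le hia with hieq | hilt
      · refine ⟨⟨k₀, by omega⟩, ?_⟩
        rw [GmatO_apply]
        simp only [Fin.val_mk]
        rw [if_neg (by omega), show 2 * (d / 2) - (c : ℕ) = a by omega, tN_apply,
          show swv (d / 2) a (2 * (d / 2) - k₀) = (c : ℕ) by
            unfold swv; split_ifs <;> omega,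
          show a = i by omega]
        exact hient
      · refine ⟨⟨i, by omega⟩, ?_⟩
        rw [GmatO_apply]
        simp only [Fin.val_mk]
        rw [if_pos (by omega), tN_apply,
          show swv (d / 2) i (c : ℕ) = (c : ℕ) by
            rw [swv, if_neg (by omega), if_neg (by omega)]]
        exact hient

lemma GmatE_cols {d k₀ : ℕ} {S : Mat d} (hST : SuperTri S) (hdk : d = 2 * k₀ + 1)
    (conda : ∀ j : Fin d, (j : ℕ) < k₀ → colNonzero S j)
    (condb : ∀ a b : Fin d, (a : ℕ) < k₀ → (a : ℕ) + (b : ℕ) = 2 * k₀ →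
      rowNonzero S a ∨ colNonzero S b)
    (hAD : adSum d S = 0) :
    ∀ c : Fin (2 * (d / 2)), colNonzero (GmatE d S) c := by
  have hK : d / 2 = k₀ := by omega
  intro c
  have hc : (c : ℕ) < 2 * k₀ := by have := c.isLt; omega
  by_cases hlt : (c : ℕ) < k₀
  · obtain ⟨i, him, hient⟩ := colNonzero_entN (conda ⟨(c : ℕ), by omega⟩ (by simpa using hlt))
    simp only [Fin.val_mk] at hient
    have hsupp := S_support hST hient
    refine ⟨⟨i, by omega⟩, ?_⟩
    rw [GmatE_apply]
    simp only [Fin.val_mk]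
    rw [if_pos (by omega), show shc (d / 2) (c : ℕ) = (c : ℕ) by
        rw [shc, if_pos (by omega)],
      tN_apply, show swv (d / 2) i (c : ℕ) = (c : ℕ) by
        rw [swv, if_neg (by omega), if_neg (by omega)]]
    exact hient
  · set a := 2 * k₀ - 1 - (c : ℕ) with ha
    have hak : a < k₀ := by omega
    rcases condb ⟨a, by omega⟩ ⟨(c : ℕ) + 1, by omega⟩ (by simpa using hak)
        (by simp only [Fin.val_mk]; omega) with hrow | hcol
    · obtain ⟨t, htm, htent⟩ := rowNonzero_entN hrow
      simp only [Fin.val_mk] at htent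
      have hsupp := S_support hST htent
      set u := swv (d / 2) a t with hu
      have hts : tN d S a u ≠ 0 := by rw [hu, tN_invol]; exact htent
      have huK : u ≠ k₀ := by
        intro h
        rw [h, ← hK] at hts
        exact hts (tN_K_zero hAD a)
      have hule : u ≤ 2 * k₀ - a := by
        rw [hu]; unfold swv; split_ifs <;> omega
      rcases eq_or_lt_of_le hule with hueq | hult
      · refine ⟨⟨a, by omega⟩, ?_⟩
        rw [GmatE_apply]
        simp only [Fin.val_mk]
        rw [if_pos (by omega), show shc (d / 2) (c : ℕ) = u by
            rw [shc, if_neg (by omega)]; omega]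
        exact hts
      · rcases lt_or_gt_of_ne huK with hu1 | hu2
        · -- u < k₀
          refine ⟨⟨2 * k₀ - 1 - u, by omega⟩, ?_⟩
          rw [GmatE_apply]
          simp only [Fin.val_mk]
          rw [if_neg (by omega), show 2 * (d / 2) - 1 - (c : ℕ) = a by omega,
            show shc (d / 2) (2 * (d / 2) - 1 - (2 * k₀ - 1 - u)) = u by
              rw [show 2 * (d / 2) - 1 - (2 * k₀ - 1 - u) = u by omega, shc,
                if_pos (by omega)]]
          exact hts
        · -- k₀ < u (and u ≤ c)
          refine ⟨⟨2 * k₀ - u, by omega⟩, ?_⟩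
          rw [GmatE_apply]
          simp only [Fin.val_mk]
          rw [if_neg (by omega), show 2 * (d / 2) - 1 - (c : ℕ) = a by omega,
            show shc (d / 2) (2 * (d / 2) - 1 - (2 * k₀ - u)) = u by
              rw [show 2 * (d / 2) - 1 - (2 * k₀ - u) = u - 1 by omega, shc,
                if_neg (by omega)]; omega]
          exact hts
    · obtain ⟨i, him, hient⟩ := colNonzero_entN hcol
      simp only [Fin.val_mk] at hient
      have hsupp := S_support hST hient
      have hia : i ≤ a := by omega
      have hine : i ≠ a := by
        intro h
        have h0 := adSum_zero_ent hAD a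
        rw [hK, show 2 * k₀ - a = (c : ℕ) + 1 by omega] at h0
        rw [h] at hient
        exact hient h0
      refine ⟨⟨i, by omega⟩, ?_⟩
      rw [GmatE_apply]
      simp only [Fin.val_mk]
      rw [if_pos (by omega), show shc (d / 2) (c : ℕ) = (c : ℕ) + 1 by
          rw [shc, if_neg (by omega)],
        tN_apply, show swv (d / 2) i ((c : ℕ) + 1) = (c : ℕ) + 1 by
          rw [swv, if_neg (by omega), if_neg (by omega)]]
      exact hient
-- ===== compositions =====

lemma swv_anti (K i : ℕ) : swv K i (2 * K - i) = K := by
  unfold swv; split_ifs <;> omega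

lemma preF_GmatO {d : ℕ} {S : Mat d} (hST : SuperTri S) (hd : d % 2 = 1)
    (i t : ℕ) : preF (2 * (d / 2) + 1) (GmatO d S) i t = tN d S i t := by
  have hm : (2 * (d / 2) + 1) % 2 = 1 := by omega
  rw [preF, if_pos hm]
  by_cases hc : i + t ≤ 2 * ((2 * (d / 2) + 1) / 2)
  · rw [if_pos hc, entN_eq' (GmatO d S) (by omega) (by omega), GmatO_apply]
    simp only [Fin.val_mk]
    rw [if_pos (by omega)]
  · rw [if_neg hc]
    symm
    by_contra h
    have := tN_support hST hd h
    omega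

lemma preF_GmatE {d : ℕ} {S : Mat d} (hST : SuperTri S) (hd : d % 2 = 1)
    (hAD : adSum d S = 0) (i t : ℕ) :
    preF (2 * (d / 2)) (GmatE d S) i t = tN d S i t := by
  have hm : ¬ (2 * (d / 2)) % 2 = 1 := by omega
  rw [preF, if_neg hm]
  rcases lt_trichotomy t ((2 * (d / 2)) / 2) with h1 | h1 | h1
  · rw [if_pos h1]
    by_cases hc : i + t + 1 ≤ 2 * ((2 * (d / 2)) / 2)
    · rw [if_pos hc, entN_eq' (GmatE d S) (by omega) (by omega), GmatE_apply]
      simp only [Fin.val_mk]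
      rw [if_pos (by omega), show shc (d / 2) t = t by rw [shc, if_pos (by omega)]]
    · rw [if_neg hc]
      symm
      by_contra h
      have := tN_support hST hd h
      omega
  · rw [if_neg (by omega), if_pos h1]
    symm
    rw [show t = d / 2 by omega]
    exact tN_K_zero hAD i
  · rw [if_neg (by omega), if_neg (by omega)]
    by_cases hc : i + t ≤ 2 * ((2 * (d / 2)) / 2)
    · rw [if_pos hc, entN_eq' (GmatE d S) (by omega) (by omega), GmatE_apply]
      simp only [Fin.val_mk]
      rw [if_pos (by omega), show shc (d / 2) (t - 1) = t by
        rw [shc, if_neg (by omega)]; omega]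
    · rw [if_neg hc]
      symm
      by_contra h
      have := tN_support hST hd h
      omega

lemma FG_odd {d : ℕ} {S : Mat d} (hST : SuperTri S) (hd : d % 2 = 1)
    (hAD : adSum d S ≠ 0) : Fmap (Gmap ⟨d, S⟩) = ⟨d, S⟩ := by
  rw [Gmap_odd hAD]
  refine SMat_ext (by simp only [Fmap]; omega) fun i j => ?_
  show entN (Fmat (2 * (d / 2) + 1) (GmatO d S)) i j = entN S i j
  by_cases hb : i < 2 * ((2 * (d / 2) + 1) / 2) + 1 ∧ j < 2 * ((2 * (d / 2) + 1) / 2) + 1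
  · rw [entN_eq' _ hb.1 hb.2, Fmat_apply]
    simp only [Fin.val_mk]
    rw [show (2 * (d / 2) + 1) / 2 = d / 2 by omega, preF_GmatO hST hd, tN_invol]
  · rw [entN, dif_neg hb, entN, dif_neg (by omega)]

lemma FG_even {d : ℕ} {S : Mat d} (hST : SuperTri S) (hd : d % 2 = 1)
    (hAD : adSum d S = 0) : Fmap (Gmap ⟨d, S⟩) = ⟨d, S⟩ := by
  rw [Gmap_even hAD]
  refine SMat_ext (by simp only [Fmap]; omega) fun i j => ?_
  show entN (Fmat (2 * (d / 2)) (GmatE d S)) i j = entN S i j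
  by_cases hb : i < 2 * ((2 * (d / 2)) / 2) + 1 ∧ j < 2 * ((2 * (d / 2)) / 2) + 1
  · rw [entN_eq' _ hb.1 hb.2, Fmat_apply]
    simp only [Fin.val_mk]
    rw [show (2 * (d / 2)) / 2 = d / 2 by omega, preF_GmatE hST hd hAD, tN_invol]
  · rw [entN, dif_neg hb, entN, dif_neg (by omega)]

lemma tN_Fmat {m : ℕ} (M : Mat m) {a b : ℕ} (ha : a < 2 * (m / 2) + 1)
    (hb : b ≤ 2 * (m / 2)) :
    tN (2 * (m / 2) + 1) (Fmat m M) a b = preF m M a b := by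
  rw [tN_apply, show (2 * (m / 2) + 1) / 2 = m / 2 by omega,
    entN_eq' _ ha (by have := swv_le (m / 2) a b hb; omega), Fmat_apply]
  simp only [Fin.val_mk]
  rw [swv_invol]

lemma adSum_Fmat_odd {m : ℕ} {M : Mat m} (hm : m % 2 = 1) (hUT : UT M)
    (hcol : ∀ j, colNonzero M j) : adSum (2 * (m / 2) + 1) (Fmat m M) ≠ 0 := by
  obtain ⟨i0, him, hent⟩ := colNonzero_entN (hcol ⟨m / 2, by omega⟩)
  simp only [Fin.val_mk] at hent
  have hle : i0 ≤ m / 2 := entN_le hUT hent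
  intro h
  have h0 := Finset.sum_eq_zero_iff.1 h i0 (Finset.mem_range.2 (by omega))
  rw [entN_eq' _ (by omega) (by omega : 2 * ((2 * (m / 2) + 1) / 2) - i0 < 2 * (m / 2) + 1),
    Fmat_apply] at h0
  simp only [Fin.val_mk] at h0
  rw [show 2 * ((2 * (m / 2) + 1) / 2) - i0 = 2 * (m / 2) - i0 by omega, swv_anti,
    preF_odd M hm (by omega)] at h0
  exact hent h0

lemma adSum_Fmat_even {m : ℕ} (M : Mat m) (hm : ¬ m % 2 = 1) :
    adSum (2 * (m / 2) + 1) (Fmat m M) = 0 := by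
  refine Finset.sum_eq_zero fun i hi => ?_
  have hi' : i < 2 * (m / 2) + 1 := Finset.mem_range.1 hi
  rw [entN_eq' _ hi' (by omega : 2 * ((2 * (m / 2) + 1) / 2) - i < 2 * (m / 2) + 1),
    Fmat_apply]
  simp only [Fin.val_mk]
  rw [show 2 * ((2 * (m / 2) + 1) / 2) - i = 2 * (m / 2) - i by omega, swv_anti,
    preF, if_neg hm, if_neg (by omega), if_pos rfl]

lemma GF_odd {m : ℕ} {M : Mat m} (hm : m % 2 = 1) (hUT : UT M) (hSD : SelfDual M)
    (hcol : ∀ j, colNonzero M j) : Gmap (Fmap ⟨m, M⟩) = ⟨m, M⟩ := by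
  show Gmap ⟨2 * (m / 2) + 1, Fmat m M⟩ = ⟨m, M⟩
  rw [Gmap_odd (adSum_Fmat_odd hm hUT hcol)]
  refine SMat_ext (show 2 * ((2 * (m / 2) + 1) / 2) + 1 = m by omega) fun i j => ?_
  show entN (GmatO (2 * (m / 2) + 1) (Fmat m M)) i j = entN M i j
  by_cases hb : i < 2 * ((2 * (m / 2) + 1) / 2) + 1 ∧ j < 2 * ((2 * (m / 2) + 1) / 2) + 1
  · rw [entN_eq' _ hb.1 hb.2, GmatO_apply]
    simp only [Fin.val_mk]
    split_ifs with h1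
    · rw [tN_Fmat M (by omega) (by omega), preF_odd M hm (by omega)]
    · rw [show 2 * ((2 * (m / 2) + 1) / 2) - j = 2 * (m / 2) - j by omega,
        show 2 * ((2 * (m / 2) + 1) / 2) - i = 2 * (m / 2) - i by omega,
        tN_Fmat M (by omega) (by omega), preF_odd M hm (by omega),
        show 2 * (m / 2) - j = m - 1 - j by omega,
        show 2 * (m / 2) - i = m - 1 - i by omega,
        ← selfdual_entN hSD (by omega) (by omega)]
  · rw [entN, dif_neg hb, entN, dif_neg (by omega)]

lemma GF_even {m : ℕ} {M : Mat m} (hm : ¬ m % 2 = 1) (hUT : UT M)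
    (hSD : SelfDual M) : Gmap (Fmap ⟨m, M⟩) = ⟨m, M⟩ := by
  show Gmap ⟨2 * (m / 2) + 1, Fmat m M⟩ = ⟨m, M⟩
  rw [Gmap_even (adSum_Fmat_even M hm)]
  refine SMat_ext (show 2 * ((2 * (m / 2) + 1) / 2) = m by omega) fun i j => ?_
  show entN (GmatE (2 * (m / 2) + 1) (Fmat m M)) i j = entN M i j
  by_cases hb : i < 2 * ((2 * (m / 2) + 1) / 2) ∧ j < 2 * ((2 * (m / 2) + 1) / 2)
  · rw [entN_eq' _ hb.1 hb.2, GmatE_apply]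
    simp only [Fin.val_mk]
    split_ifs with h1
    · by_cases hj : j < (2 * (m / 2) + 1) / 2
      · rw [show shc ((2 * (m / 2) + 1) / 2) j = j by rw [shc, if_pos hj],
          tN_Fmat M (by omega) (by omega), preF_low M (by omega) (by omega)]
      · rw [show shc ((2 * (m / 2) + 1) / 2) j = j + 1 by rw [shc, if_neg hj],
          tN_Fmat M (by omega) (by omega), preF_high_even M hm (by omega) (by omega)]
        simp
    · by_cases hi : 2 * ((2 * (m / 2) + 1) / 2) - 1 - i < (2 * (m / 2) + 1) / 2
      · rw [show shc ((2 * (m / 2) + 1) / 2) (2 * ((2 * (m / 2) + 1) / 2) - 1 - i)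
            = 2 * (m / 2) - 1 - i by rw [shc, if_pos hi]; omega,
          show 2 * ((2 * (m / 2) + 1) / 2) - 1 - j = 2 * (m / 2) - 1 - j by omega,
          tN_Fmat M (by omega) (by omega), preF_low M (by omega) (by omega),
          show 2 * (m / 2) - 1 - j = m - 1 - j by omega,
          show 2 * (m / 2) - 1 - i = m - 1 - i by omega,
          ← selfdual_entN hSD (by omega) (by omega)]
      · rw [show shc ((2 * (m / 2) + 1) / 2) (2 * ((2 * (m / 2) + 1) / 2) - 1 - i)
            = 2 * (m / 2) - i by rw [shc, if_neg hi]; omega,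
          show 2 * ((2 * (m / 2) + 1) / 2) - 1 - j = 2 * (m / 2) - 1 - j by omega,
          tN_Fmat M (by omega) (by omega), preF_high_even M hm (by omega) (by omega),
          show 2 * (m / 2) - 1 - j = m - 1 - j by omega,
          show 2 * (m / 2) - i - 1 = m - 1 - i by omega,
          ← selfdual_entN hSD (by omega) (by omega)]
  · rw [entN, dif_neg hb, entN, dif_neg (by omega)]
-- ===== assembly =====

lemma forward_mem {n k p : ℕ} (hn : 1 ≤ n) {A : SMat} (hA : A ∈ Mset₃ n k p) :
    Fmap A ∈ SMset₃ n k p := by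
  obtain ⟨m, M⟩ := A
  simp only [Mset₃, Mset₂, Mset, Set.mem_setOf_eq] at hA
  obtain ⟨⟨⟨⟨hUT, hrow, hcol⟩, hSD, hred⟩, hfrs⟩, hdiag⟩ := hA
  have hm : 0 < m := by
    by_contra h
    obtain rfl : m = 0 := by omega
    simp only [reducedSize, Finset.univ_eq_empty, Finset.sum_empty] at hred
    omega
  refine ⟨⟨Fmat_superTri hUT, ?_, ⟨m / 2, rfl, Fmat_conda hUT hcol,
    Fmat_condb hUT hSD hrow⟩⟩, ?_, ?_⟩
  · exact (msize_Fmat m M).trans hred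
  · exact (firstRowSum_Fmat hm M).trans hfrs
  · exact (centerColSum_Fmat M hUT).trans hdiag

lemma backward_mem {n k p : ℕ} (hn : 1 ≤ n) {B : SMat} (hB : B ∈ SMset₃ n k p) :
    Gmap B ∈ Mset₃ n k p ∧ Fmap (Gmap B) = B := by
  obtain ⟨d, S⟩ := B
  simp only [SMset₃, SMset, Set.mem_setOf_eq] at hB
  obtain ⟨⟨hST, hms, k₀, hdk, conda, condb⟩, hfrs, hccs⟩ := hB
  have hd : d % 2 = 1 := by omega
  by_cases hAD : adSum d S = 0
  · -- image came from an even-dimensional matrix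
    have hFG := FG_even hST hd hAD
    have hK1 : 1 ≤ d / 2 := by
      by_contra hle
      have hne : msize S ≠ 0 := by omega
      rw [msize_eq] at hne
      obtain ⟨i, _, hi⟩ := Finset.exists_ne_zero_of_sum_ne_zero hne
      obtain ⟨j, _, hj⟩ := Finset.exists_ne_zero_of_sum_ne_zero hi
      obtain ⟨hil, hjl⟩ := entN_ne_zero hj
      have h0 := adSum_zero_ent hAD i
      rw [show 2 * (d / 2) - i = j by omega] at h0
      exact hj h0
    have hcols := GmatE_cols hST hdk conda condb hAD
    have hUT' := GmatE_UT hST hd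
    have h1 := msize_Fmat (2 * (d / 2)) (GmatE d S)
    have h2 := congrArg (fun A : SMat => msize A.2) hFG
    rw [Gmap_even hAD] at h2 ⊢
    simp only [Mset₃, Mset₂, Mset, Set.mem_setOf_eq]
    have h3 := congrArg (fun A : SMat => firstRowSum A.2) hFG
    rw [Gmap_even hAD] at h3
    have h4 := congrArg (fun A : SMat => centerColSum A.2) hFG
    rw [Gmap_even hAD] at h4
    have hFG' := hFG
    rw [Gmap_even hAD] at hFG'
    refine ⟨⟨⟨⟨⟨hUT', rowNonzero_of_selfdual (GmatE_selfDual S) hcols, hcols⟩,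
      GmatE_selfDual S, ?_⟩, ?_⟩, ?_⟩, hFG'⟩
    · exact h1.symm.trans (h2.trans hms)
    · exact ((firstRowSum_Fmat (by omega) (GmatE d S)).symm.trans (h3.trans hfrs))
    · exact ((centerColSum_Fmat (GmatE d S) hUT').symm.trans (h4.trans hccs))
  · -- image came from an odd-dimensional matrix
    have hFG := FG_odd hST hd hAD
    have hcols := GmatO_cols hST hdk conda condb hAD
    have hUT' := GmatO_UT hST hd
    have h1 := msize_Fmat (2 * (d / 2) + 1) (GmatO d S)
    have h2 := congrArg (fun A : SMat => msize A.2) hFG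
    rw [Gmap_odd hAD] at h2 ⊢
    simp only [Mset₃, Mset₂, Mset, Set.mem_setOf_eq]
    have h3 := congrArg (fun A : SMat => firstRowSum A.2) hFG
    rw [Gmap_odd hAD] at h3
    have h4 := congrArg (fun A : SMat => centerColSum A.2) hFG
    rw [Gmap_odd hAD] at h4
    have hFG' := hFG
    rw [Gmap_odd hAD] at hFG'
    refine ⟨⟨⟨⟨⟨hUT', rowNonzero_of_selfdual (GmatO_selfDual S) hcols, hcols⟩,
      GmatO_selfDual S, ?_⟩, ?_⟩, ?_⟩, hFG'⟩
    · exact h1.symm.trans (h2.trans hms)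
    · exact ((firstRowSum_Fmat (by omega) (GmatO d S)).symm.trans (h3.trans hfrs))
    · exact ((centerColSum_Fmat (GmatO d S) hUT').symm.trans (h4.trans hccs))

theorem stmt3 (n k p : ℕ) (hn : 1 ≤ n) :
    (Mset₃ n k p).ncard = (SMset₃ n k p).ncard := by
  have hGF : ∀ A ∈ Mset₃ n k p, Gmap (Fmap A) = A := by
    intro A hA
    obtain ⟨m, M⟩ := A
    simp only [Mset₃, Mset₂, Mset, Set.mem_setOf_eq] at hA
    obtain ⟨⟨⟨⟨hUT, hrow, hcol⟩, hSD, hred⟩, _⟩, _⟩ := hA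
    by_cases hm : m % 2 = 1
    · exact GF_odd hm hUT hSD hcol
    · exact GF_even hm hUT hSD
  have himg : Fmap '' (Mset₃ n k p) = SMset₃ n k p := by
    ext B
    constructor
    · rintro ⟨A, hA, rfl⟩
      exact forward_mem hn hA
    · intro hB
      exact ⟨Gmap B, (backward_mem hn hB).1, (backward_mem hn hB).2⟩
  have hinj : Set.InjOn Fmap (Mset₃ n k p) := by
    intro A hA A' hA' h
    rw [← hGF A hA, ← hGF A' hA', h]
  rw [← himg, Set.ncard_image_of_injOn hinj]
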